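/- Let p : ℕ → ℝ satisfy p k ≥ 0 for all k, ∑' k, p k = 1, and suppose the series ∑' k, (k : ℝ) * p k converges with sum m > 1. Then there exists q ∈ [0, 1) such that ∑' k, p k * q ^ k = q. -/

import Mathlib

open Finset Filter Topology Set

/-- The generating function of a supercritical offspring distribution has a fixed point in
`[0, 1)`. -/
theorem generating_function_fixed_point_lt_one
    (p : ℕ → ℝ) (hp : ∀ k, 0 ≤ p k)
    (hsum : ∑' k, p k = 1)
    (m : ℝ) (hmean : Summable (fun k : ℕ => (k : ℝ) * p k))
    (hm : ∑' k : ℕ, (k : ℝ) * p k = m) (hm1 : 1 < m) :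
    ∃ q ∈ Set.Ico (0 : ℝ) 1, ∑' k, p k * q ^ k = q := by
  -- summability of p
  have hP : Summable p := by
    by_contra h
    rw [tsum_eq_zero_of_not_summable h] at hsum; norm_num at hsum
  -- key pointwise inequality: (1-s) * k * s^(k-1) ≤ 1 - s^k on [0,1]
  have key : ∀ s : ℝ, 0 ≤ s → s ≤ 1 → ∀ k : ℕ,
      (1 - s) * ((k : ℝ) * s ^ (k - 1)) ≤ 1 - s ^ k := by
    intro s hs0 hs1 k
    have h1 : (k : ℝ) * s ^ (k - 1) ≤ ∑ i ∈ range k, s ^ i := by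
      calc (k : ℝ) * s ^ (k - 1) = ∑ _i ∈ range k, s ^ (k - 1) := by
            simp [Finset.sum_const, nsmul_eq_mul]
        _ ≤ ∑ i ∈ range k, s ^ i :=
            Finset.sum_le_sum fun i hi =>
              pow_le_pow_of_le_one hs0 hs1 (Nat.le_pred_of_lt (Finset.mem_range.mp hi))
    have hg := geom_sum_mul s k
    have h2 : (1 - s) * ∑ i ∈ range k, s ^ i = 1 - s ^ k := by linear_combination -hg
    calc (1 - s) * ((k : ℝ) * s ^ (k - 1)) ≤ (1 - s) * ∑ i ∈ range k, s ^ i :=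
          mul_le_mul_of_nonneg_left h1 (by linarith)
      _ = 1 - s ^ k := h2
  -- choose N with partial sum > 1
  have htend : Tendsto (fun n => ∑ k ∈ range n, (k : ℝ) * p k) atTop (𝓝 m) := by
    simpa [hm] using hmean.hasSum.tendsto_sum_nat
  obtain ⟨N, hN⟩ : ∃ N, 1 < ∑ k ∈ range N, (k : ℝ) * p k :=
    ((tendsto_order.mp htend).1 1 hm1).exists
  -- choose s0 ∈ (0,1) with ∑_{k<N} k p_k s0^(k-1) > 1
  set φ : ℝ → ℝ := fun s => ∑ k ∈ range N, (k : ℝ) * p k * s ^ (k - 1) with hφdef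
  have hφcont : Continuous φ := by
    apply continuous_finset_sum
    intro k _
    exact (continuous_const.mul (continuous_pow _))
  have hφ1 : 1 < φ 1 := by simpa [hφdef] using hN
  have hev : ∀ᶠ s in 𝓝[<] (1 : ℝ), 1 < φ s :=
    eventually_nhdsWithin_of_eventually_nhds
      ((tendsto_order.mp hφcont.continuousAt).1 1 hφ1)
  have hmem : Ioo (0 : ℝ) 1 ∈ 𝓝[<] (1 : ℝ) :=
    Ioo_mem_nhdsLT_of_mem (by constructor <;> norm_num)
  obtain ⟨s0, hφs0, hs0mem⟩ := (hev.and (eventually_of_mem hmem fun x hx => hx : ∀ᶠ s in 𝓝[<] (1:ℝ), s ∈ Ioo (0:ℝ) 1)).exists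
  obtain ⟨hs00, hs01⟩ := hs0mem
  -- summability facts at s0
  have hSsum : Summable (fun k => p k * s0 ^ k) :=
    Summable.of_nonneg_of_le (fun k => mul_nonneg (hp k) (pow_nonneg hs00.le k))
      (fun k => mul_le_of_le_one_right (hp k) (pow_le_one₀ hs00.le hs01.le)) hP
  have hTsum : Summable (fun k : ℕ => (k : ℝ) * p k * s0 ^ (k - 1)) :=
    Summable.of_nonneg_of_le
      (fun k => mul_nonneg (mul_nonneg (Nat.cast_nonneg k) (hp k)) (pow_nonneg hs00.le _))
      (fun k => mul_le_of_le_one_right (mul_nonneg (Nat.cast_nonneg k) (hp k))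
        (pow_le_one₀ hs00.le hs01.le)) hmean
  -- termwise estimate
  have hterm : ∀ k : ℕ, (1 - s0) * ((k : ℝ) * p k * s0 ^ (k - 1)) ≤ p k - p k * s0 ^ k := by
    intro k
    have h := mul_le_mul_of_nonneg_left (key s0 hs00.le hs01.le k) (hp k)
    nlinarith [h]
  -- sum the estimate
  have hsum_ineq : (1 - s0) * ∑' k : ℕ, (k : ℝ) * p k * s0 ^ (k - 1)
      ≤ 1 - ∑' k, p k * s0 ^ k := by
    have h1 : ∑' k : ℕ, (1 - s0) * ((k : ℝ) * p k * s0 ^ (k - 1))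
        ≤ ∑' k : ℕ, (p k - p k * s0 ^ k) :=
      Summable.tsum_le_tsum hterm (hTsum.mul_left _) (hP.sub hSsum)
    rw [tsum_mul_left] at h1
    rwa [Summable.tsum_sub hP hSsum, hsum] at h1
  have hTlarge : 1 < ∑' k : ℕ, (k : ℝ) * p k * s0 ^ (k - 1) := by
    calc (1 : ℝ) < φ s0 := hφs0
      _ ≤ ∑' k : ℕ, (k : ℝ) * p k * s0 ^ (k - 1) :=
        Summable.sum_le_tsum (range N)
          (fun k _ => mul_nonneg (mul_nonneg (Nat.cast_nonneg k) (hp k))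
            (pow_nonneg hs00.le _)) hTsum
  have hfs0 : ∑' k, p k * s0 ^ k < s0 := by nlinarith [hsum_ineq, hTlarge]
  -- continuity of the generating function via clamping
  set c : ℝ → ℝ := fun s => max 0 (min s 1) with hcdef
  have hc : Continuous c := continuous_const.max (continuous_id.min continuous_const)
  have hc0 : ∀ s, 0 ≤ c s := fun s => le_max_left _ _
  have hc1 : ∀ s, c s ≤ 1 := fun s => max_le (by norm_num) (min_le_right _ _)
  have hceq : ∀ s, 0 ≤ s → s ≤ 1 → c s = s := by
    intro s h0 h1; simp [hcdef, min_eq_left h1, max_eq_right h0]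
  set F : ℝ → ℝ := fun s => ∑' k, p k * (c s) ^ k with hFdef
  have hFcont : Continuous F := by
    apply continuous_tsum (fun k => continuous_const.mul (hc.pow k)) hP
    intro k x
    show ‖p k * c x ^ k‖ ≤ p k
    rw [Real.norm_eq_abs, abs_of_nonneg (mul_nonneg (hp k) (pow_nonneg (hc0 x) k))]
    exact mul_le_of_le_one_right (hp k) (pow_le_one₀ (hc0 x) (hc1 x))
  have hF0 : F 0 = p 0 := by
    have : c 0 = 0 := hceq 0 le_rfl (by norm_num)
    rw [hFdef]; simp only [this]
    rw [tsum_eq_single 0 (fun k hk => by simp [zero_pow hk])]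
    simp
  have hFs0 : F s0 = ∑' k, p k * s0 ^ k := by
    rw [hFdef]; simp only [hceq s0 hs00.le hs01.le]
  -- IVT
  set h : ℝ → ℝ := fun s => F s - s with hhdef
  have hhcont : ContinuousOn h (Icc 0 s0) := (hFcont.sub continuous_id).continuousOn
  have h0 : 0 ≤ h 0 := by simp [hhdef, hF0, hp 0]
  have hs0' : h s0 < 0 := by simp only [hhdef]; rw [hFs0]; linarith
  have hmemIcc : (0 : ℝ) ∈ Icc (h s0) (h 0) := ⟨hs0'.le, h0⟩
  obtain ⟨q, hqmem, hq⟩ := intermediate_value_Icc' hs00.le hhcont hmemIcc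
  refine ⟨q, ⟨hqmem.1, lt_of_le_of_lt hqmem.2 hs01⟩, ?_⟩
  have hcq : c q = q := hceq q hqmem.1 (hqmem.2.trans hs01.le)
  have hFq : F q = q := by simpa [hhdef, sub_eq_zero] using hq
  simpa only [hFdef, hcq] using hFq
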